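/- Let S be a finite set, f : S → ℝ with f(x) > 0 for all x, g : S → ℝ, and let p*, π be probability distributions on S with full support. Define Ω_p(x) = f(x)·log p(x) + g(x). If for all x_A, x_B ∈ S, σ(Ω_{p*}(x_A) − Ω_{p*}(x_B)) = σ(Ω_π(x_A) − Ω_π(x_B)), then π(x) = p*(x) for all x ∈ S. -/

import Mathlib

noncomputable def sigm (t : ℝ) : ℝ := 1 / (1 + Real.exp (-t))

lemma sigm_injective : Function.Injective sigm := by
  intro a b hab
  unfold sigm at hab
  field_simp at hab
  have := Real.exp_injective (add_left_cancel hab)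
  linarith

theorem stmt_5 {S : Type*} [Fintype S] [Nonempty S]
    (f g : S → ℝ) (hf : ∀ x, 0 < f x)
    (pstar π : S → ℝ)
    (hppos : ∀ x, 0 < pstar x) (hpsum : ∑ x, pstar x = 1)
    (hπpos : ∀ x, 0 < π x) (hπsum : ∑ x, π x = 1)
    (h : ∀ xA xB : S,
      sigm ((f xA * Real.log (pstar xA) + g xA) - (f xB * Real.log (pstar xB) + g xB)) =
      sigm ((f xA * Real.log (π xA) + g xA) - (f xB * Real.log (π xB) + g xB))) :
    ∀ x : S, π x = pstar x := by
  -- derive that f x * (log pstar x - log π x) is constant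
  obtain ⟨y⟩ := ‹Nonempty S›
  set c : ℝ := f y * (Real.log (pstar y) - Real.log (π y)) with hc
  have key : ∀ x, f x * (Real.log (pstar x) - Real.log (π x)) = c := by
    intro x
    have := sigm_injective (h x y)
    nlinarith [this]
  -- sign analysis on c
  have hd : ∀ x, Real.log (pstar x) - Real.log (π x) = c / f x := by
    intro x
    rw [eq_div_iff (hf x).ne']
    linear_combination key x
  rcases lt_trichotomy c 0 with hcneg | hczero | hcpos
  · exfalso
    have hlt : ∀ x : S, pstar x < π x := by
      intro x
      have h1 : Real.log (pstar x) < Real.log (π x) := by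
        have := hd x
        have : Real.log (pstar x) - Real.log (π x) < 0 := by
          rw [this]; exact div_neg_of_neg_of_pos hcneg (hf x)
        linarith
      exact (Real.log_lt_log_iff (hppos x) (hπpos x)).mp h1
    have : ∑ x, pstar x < ∑ x, π x :=
      Finset.sum_lt_sum_of_nonempty Finset.univ_nonempty (fun x _ => hlt x)
    rw [hpsum, hπsum] at this
    exact lt_irrefl 1 this
  · intro x
    have h1 : Real.log (pstar x) = Real.log (π x) := by
      have := hd x
      rw [hczero, zero_div] at this
      linarith
    exact (Real.log_injOn_pos (Set.mem_Ioi.mpr (hπpos x)) (Set.mem_Ioi.mpr (hppos x)) h1.symm)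
  · exfalso
    have hlt : ∀ x : S, π x < pstar x := by
      intro x
      have h1 : Real.log (π x) < Real.log (pstar x) := by
        have := hd x
        have h2 : 0 < Real.log (pstar x) - Real.log (π x) := by
          rw [this]; exact div_pos hcpos (hf x)
        linarith
      exact (Real.log_lt_log_iff (hπpos x) (hppos x)).mp h1
    have : ∑ x, π x < ∑ x, pstar x :=
      Finset.sum_lt_sum_of_nonempty Finset.univ_nonempty (fun x _ => hlt x)
    rw [hpsum, hπsum] at this
    exact lt_irrefl 1 this
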